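/- Let |q| < 1, |ρ| < 1 and let x, y be real. For every integer n ≥ 1: P_n(x|y,ρ,q) = (ρ²;q)_n Σ_{i=0}^{n} [n choose i]_q (-1)^i q^{i(i-1)/2} ρ^i H_{n-i}(x|q) P_i(y|x,ρ,q)/(ρ²;q)_i. -/

import Mathlib

open MeasureTheory Real Finset
open scoped Classical

noncomputable section

/-- The q-bracket `[n]_q = 1 + q + ... + q^(n-1)`. -/
def qBracket (q : ℝ) (n : ℕ) : ℝ := ∑ i ∈ Finset.range n, q ^ i

/-- The q-factorial `[n]_q!`. -/
def qFactorial (q : ℝ) (n : ℕ) : ℝ := ∏ i ∈ Finset.range n, qBracket q (i + 1)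

/-- The q-binomial coefficient `[n choose k]_q`, equal to `0` when `k > n`. -/
def qBinom (q : ℝ) (n k : ℕ) : ℝ :=
  if k ≤ n then qFactorial q n / (qFactorial q (n - k) * qFactorial q k) else 0

/-- The q-Pochhammer symbol `(a;q)_n`. -/
def qPoch (a q : ℝ) (n : ℕ) : ℝ := ∏ i ∈ Finset.range n, (1 - a * q ^ i)

/-- The infinite q-Pochhammer symbol `(a;q)_∞`. -/
def qPochInf (a q : ℝ) : ℝ := ∏' i : ℕ, (1 - a * q ^ i)

/-- The q-Hermite polynomials `H_n(x|q)`. -/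
def qHermite (q x : ℝ) : ℕ → ℝ
  | 0 => 1
  | 1 => x
  | (n + 2) => x * qHermite q x (n + 1) - qBracket q (n + 1) * qHermite q x n

/-- The Al-Salam--Chihara polynomials `P_n(x|y,ρ,q)`. -/
def ASC (q x y ρ : ℝ) : ℕ → ℝ
  | 0 => 1
  | 1 => x - ρ * y
  | (n + 2) => (x - ρ * y * q ^ (n + 1)) * ASC q x y ρ (n + 1) -
      (1 - ρ ^ 2 * q ^ n) * qBracket q (n + 1) * ASC q x y ρ n

/-- The auxiliary polynomials `B_n(y|q)`. -/
def Bpoly (q y : ℝ) : ℕ → ℝ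
  | 0 => 1
  | 1 => -y
  | (n + 2) => -q ^ (n + 1) * y * Bpoly q y (n + 1) + q ^ n * qBracket q (n + 1) * Bpoly q y n

/-- The support interval `S(q) = [-2/√(1-q), 2/√(1-q)]`. -/
def Sset (q : ℝ) : Set ℝ := Set.Icc (-2 / Real.sqrt (1 - q)) (2 / Real.sqrt (1 - q))

/-- The auxiliary quadratic `r_k(t|q) = (1+q^k)² - (1-q) t q^k`. -/
def rAux (q t : ℝ) (k : ℕ) : ℝ := (1 + q ^ k) ^ 2 - (1 - q) * t * q ^ k

/-- The density `f_N(x|q)` making the q-Hermite polynomials orthogonal. -/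
def fN (q x : ℝ) : ℝ :=
  if x ∈ Sset q then
    qPochInf q q * Real.sqrt (1 - q) / (2 * Real.pi * Real.sqrt (rAux q (x ^ 2) 0)) *
      ∏' k : ℕ, rAux q (x ^ 2) k
  else 0

/-- The auxiliary quadratic `v_0(x,y|ρ,q)`. -/
def v0 (q x y ρ : ℝ) : ℝ :=
  (1 - ρ ^ 2) ^ 2 - (1 - q) * ρ * (1 + ρ ^ 2) * x * y + (1 - q) * ρ ^ 2 * (x ^ 2 + y ^ 2)

/-- The auxiliary quadratic `v_k(x,y|ρ,q) = v_0(x,y|ρ q^k,q)`. -/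
def vAux (q x y ρ : ℝ) (k : ℕ) : ℝ := v0 q x y (ρ * q ^ k)

/-- The density `f_CN(x|y,ρ,q)` making the Al-Salam--Chihara polynomials orthogonal. -/
def fCN (q x y ρ : ℝ) : ℝ :=
  if x ∈ Sset q then
    Real.sqrt (1 - q) * qPochInf q q * qPochInf (ρ ^ 2) q /
        (2 * Real.pi * Real.sqrt (rAux q (x ^ 2) 0)) *
      ∏' k : ℕ, rAux q (x ^ 2) k / vAux q x y ρ k
  else 0

/-- The polynomials `Q_{m,k}(x,y|ρ,q)`. -/
def Qmk (q x y ρ : ℝ) (m k : ℕ) : ℝ :=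
  ∑ s ∈ Finset.range (k + 1), (-1 : ℝ) ^ s * q ^ (s * (s - 1) / 2) * qBinom q k s * ρ ^ s *
    qHermite q y (k - s) * ASC q x y ρ (m + s) / qPoch (ρ ^ 2) q (m + s)

/-- The polynomials `C_n(x,y|ρ₁,ρ₂,ρ₃,q)`. -/
def Cn (q x y ρ₁ ρ₂ ρ₃ : ℝ) (n : ℕ) : ℝ :=
  ∑ i ∈ Finset.range (n + 1), qBinom q n i * ρ₁ ^ (n - i) * ρ₂ ^ i * Qmk q x y ρ₃ (n - i) i

/-- The q-analogue `f_3D` of the 3-dimensional Kibble--Slepian expansion. -/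
def f3D (q x₁ x₂ x₃ ρ₁₂ ρ₁₃ ρ₂₃ : ℝ) : ℝ :=
  fN q x₁ * fN q x₂ * fN q x₃ *
    ∑' p : ℕ × ℕ × ℕ,
      ρ₁₂ ^ p.2.1 * ρ₂₃ ^ p.2.2 * ρ₁₃ ^ p.1 /
          (qFactorial q p.1 * qFactorial q p.2.1 * qFactorial q p.2.2) *
        qHermite q x₁ (p.1 + p.2.1) * qHermite q x₂ (p.2.1 + p.2.2) *
        qHermite q x₃ (p.1 + p.2.2)
namespace ASCaux

variable {q ρ x y : ℝ}

lemma bracket_pos (hq : |q| < 1) (n : ℕ) : 0 < qBracket q (n + 1) := by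
  have hq1 : q ≠ 1 := by intro h; rw [h] at hq; norm_num at hq
  have h1 : qBracket q (n+1) = (q ^ (n+1) - 1) / (q - 1) := by
    rw [qBracket, geom_sum_eq hq1]
  rw [h1]
  apply div_pos_of_neg_of_neg
  · have : |q ^ (n+1)| < 1 := by
      rw [abs_pow]; exact pow_lt_one₀ (abs_nonneg q) hq (Nat.succ_ne_zero n)
    linarith [abs_lt.mp this]
  · linarith [abs_lt.mp hq]

lemma fact_pos (hq : |q| < 1) (n : ℕ) : 0 < qFactorial q n := by
  rw [qFactorial]
  exact Finset.prod_pos fun i _ => bracket_pos hq i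

lemma fact_succ (q : ℝ) (n : ℕ) : qFactorial q (n + 1) = qFactorial q n * qBracket q (n + 1) := by
  rw [qFactorial, qFactorial, Finset.prod_range_succ]

lemma bracket_add (q : ℝ) (a b : ℕ) :
    qBracket q (a + b) = qBracket q a + q ^ a * qBracket q b := by
  rw [qBracket, qBracket, qBracket, Finset.sum_range_add, Finset.mul_sum]
  simp [pow_add]

lemma one_sub_pow (q : ℝ) (m : ℕ) : 1 - q ^ m = (1 - q) * qBracket q m := by
  have := geom_sum_mul q m
  rw [qBracket]; nlinarith [this]

end ASCaux
namespace ASCaux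

variable {q ρ x y : ℝ}

lemma binom_zero (hq : |q| < 1) (n : ℕ) : qBinom q n 0 = 1 := by
  rw [qBinom, if_pos (Nat.zero_le n), Nat.sub_zero]
  have h0 : qFactorial q 0 = 1 := by simp [qFactorial]
  rw [h0, mul_one, div_self (fact_pos hq n).ne']

lemma binom_self (hq : |q| < 1) (n : ℕ) : qBinom q n n = 1 := by
  rw [qBinom, if_pos le_rfl, Nat.sub_self]
  have h0 : qFactorial q 0 = 1 := by simp [qFactorial]
  rw [h0, one_mul, div_self (fact_pos hq n).ne']

lemma binom_gt (q : ℝ) {n k : ℕ} (h : n < k) : qBinom q n k = 0 := by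
  rw [qBinom, if_neg (by omega)]

lemma mulBracket1 (hq : |q| < 1) {n i : ℕ} (h : i ≤ n) :
    qBinom q (n + 1) (i + 1) * qBracket q (i + 1) = qBracket q (n + 1) * qBinom q n i := by
  rw [qBinom, if_pos (by omega), qBinom, if_pos h]
  have h1 : n + 1 - (i + 1) = n - i := by omega
  rw [h1, fact_succ q n, fact_succ q i]
  have h2 := (fact_pos hq (n - i)).ne'
  have h3 := (fact_pos hq i).ne'
  have h4 := (bracket_pos hq i).ne'
  field_simp

lemma mulBracket2 (hq : |q| < 1) {n i : ℕ} (h : i ≤ n) :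
    qBinom q (n + 1) i * qBracket q (n + 1 - i) = qBracket q (n + 1) * qBinom q n i := by
  rw [qBinom, if_pos (by omega), qBinom, if_pos h]
  have h1 : n + 1 - i = (n - i) + 1 := by omega
  rw [h1, fact_succ q n, fact_succ q (n - i)]
  have h2 := (fact_pos hq (n - i)).ne'
  have h3 := (fact_pos hq i).ne'
  have h4 := (bracket_pos hq (n - i)).ne'
  field_simp

lemma pascal (hq : |q| < 1) {n i : ℕ} (h : i ≤ n) :
    qBinom q (n + 1) (i + 1) = qBinom q n (i + 1) + q ^ (n - i) * qBinom q n i := by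
  rcases eq_or_lt_of_le h with rfl | hlt
  · rw [binom_self hq, binom_self hq, binom_gt q (by omega)]
    simp
  · have hi1 : i + 1 ≤ n := hlt
    rw [qBinom, if_pos (by omega), qBinom, if_pos hi1, qBinom, if_pos h]
    have h1 : n + 1 - (i + 1) = n - i := by omega
    have h2 : n - i = (n - (i + 1)) + 1 := by omega
    have hb : qBracket q (n + 1) = qBracket q (n - i) + q ^ (n - i) * qBracket q (i + 1) := by
      have := bracket_add q (n - i) (i + 1)
      rw [show n - i + (i + 1) = n + 1 by omega] at this
      exact this
    rw [h1, fact_succ q n, h2, fact_succ q (n - (i+1)), fact_succ q i, ← h2, hb]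
    set A := qFactorial q n
    set B := qFactorial q (n - (i + 1))
    set C := qFactorial q i
    set u := qBracket q (n - i)
    set v := qBracket q (i + 1)
    have hB : B ≠ 0 := (fact_pos hq _).ne'
    have hC : C ≠ 0 := (fact_pos hq _).ne'
    have hu : u ≠ 0 := by rw [show u = qBracket q (n - i) from rfl, h2]; exact (bracket_pos hq _).ne'
    have hv : v ≠ 0 := (bracket_pos hq _).ne'
    field_simp

end ASCaux
namespace ASCaux

variable {q ρ x y : ℝ}

noncomputable def dcoef (q ρ : ℝ) (i : ℕ) : ℝ := (-1) ^ i * q ^ (i * (i - 1) / 2) * ρ ^ i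

noncomputable def GG (q ρ x y : ℝ) (i : ℕ) : ℝ := ASC q y x ρ i / qPoch (ρ ^ 2) q i

noncomputable def SS (q ρ x y : ℝ) (n : ℕ) : ℝ :=
  ∑ i ∈ Finset.range (n + 1),
    qBinom q n i * dcoef q ρ i * qHermite q x (n - i) * GG q ρ x y i

lemma dcoef_succ (q ρ : ℝ) (i : ℕ) : dcoef q ρ (i + 1) = -ρ * q ^ i * dcoef q ρ i := by
  have he : (i + 1) * (i + 1 - 1) / 2 = i * (i - 1) / 2 + i := by
    rcases i with _ | j
    · simp
    · have : (j + 2) * (j + 1) = (j + 1) * j + 2 * (j + 1) := by ring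
      simp only [Nat.add_sub_cancel]
      rw [this, Nat.add_mul_div_left _ _ (by norm_num : 0 < 2)]
    
  rw [dcoef, dcoef, he, pow_add, pow_succ, pow_succ]
  ring

lemma poch_succ (a q : ℝ) (n : ℕ) : qPoch a q (n + 1) = qPoch a q n * (1 - a * q ^ n) := by
  rw [qPoch, qPoch, Finset.prod_range_succ]

lemma factor_pos (hq : |q| < 1) (hρ : |ρ| < 1) (i : ℕ) : 0 < 1 - ρ ^ 2 * q ^ i := by
  have h1 : |ρ ^ 2 * q ^ i| < 1 := by
    rw [abs_mul, abs_pow, abs_pow]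
    have hρ2 : |ρ| ^ 2 < 1 := by nlinarith [abs_nonneg ρ]
    have hqi : |q| ^ i ≤ 1 := pow_le_one₀ (abs_nonneg q) hq.le
    nlinarith [pow_nonneg (abs_nonneg q) i, pow_nonneg (abs_nonneg ρ) 2]
  linarith [abs_lt.mp h1]

lemma poch_pos (hq : |q| < 1) (hρ : |ρ| < 1) (n : ℕ) : 0 < qPoch (ρ ^ 2) q n := by
  rw [qPoch]
  exact Finset.prod_pos fun i _ => factor_pos hq hρ i

lemma Hrec (q x : ℝ) (j : ℕ) :
    qHermite q x (j + 1) = x * qHermite q x j - qBracket q j * qHermite q x (j - 1) := by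
  rcases j with _ | k
  · simp [qHermite, qBracket]
  · rfl

lemma Grec (hq : |q| < 1) (hρ : |ρ| < 1) (i : ℕ) :
    (1 - ρ ^ 2 * q ^ i) * GG q ρ x y (i + 1) =
      (y - ρ * x * q ^ i) * GG q ρ x y i - qBracket q i * GG q ρ x y (i - 1) := by
  rcases i with _ | j
  · have h0 : qPoch (ρ ^ 2) q 0 = 1 := by simp [qPoch]
    have h1 : qPoch (ρ ^ 2) q 1 = 1 - ρ ^ 2 := by simp [qPoch]
    simp only [GG, ASC, h0, h1, pow_zero, Nat.zero_sub, qBracket]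
    rw [div_one]
    have : (1 : ℝ) - ρ ^ 2 ≠ 0 := by
      have := factor_pos hq hρ 0
      simpa using this.ne'
    field_simp
    simp
  · have hrec : ASC q y x ρ (j + 2) = (y - ρ * x * q ^ (j + 1)) * ASC q y x ρ (j + 1) -
        (1 - ρ ^ 2 * q ^ j) * qBracket q (j + 1) * ASC q y x ρ j := rfl
    simp only [GG, Nat.add_sub_cancel]
    rw [hrec, poch_succ, poch_succ]
    have p0 := (poch_pos hq hρ j).ne'
    have f1 := (factor_pos hq hρ j).ne'
    have f2 := (factor_pos hq hρ (j + 1)).ne'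
    field_simp

end ASCaux
namespace ASCaux

variable {q ρ x y : ℝ}

lemma bracket_zero (q : ℝ) : qBracket q 0 = 0 := by simp [qBracket]

/-- Step A: Pascal + Hermite recurrence split of `SS (n+2)`. -/
lemma keyA (hq : |q| < 1) (hρ : |ρ| < 1) (n : ℕ) :
    SS q ρ x y (n + 2) = x * SS q ρ x y (n + 1) - qBracket q (n + 1) * SS q ρ x y n
      + (-ρ * q ^ (n + 1)) *
        ∑ i ∈ Finset.range (n + 2), qBinom q (n + 1) i * dcoef q ρ i *
          qHermite q x (n + 1 - i) * GG q ρ x y (i + 1) := by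
  have h1 : SS q ρ x y (n + 2) =
      (∑ i ∈ Finset.range (n + 2), qBinom q (n + 1) i * dcoef q ρ i *
          qHermite q x (n + 2 - i) * GG q ρ x y i)
      + ∑ i ∈ Finset.range (n + 2), q ^ (n + 1 - i) * qBinom q (n + 1) i * dcoef q ρ (i + 1) *
          qHermite q x (n + 1 - i) * GG q ρ x y (i + 1) := by
    rw [SS, Finset.sum_range_succ']
    rw [Finset.sum_range_succ'
      (fun i => qBinom q (n + 1) i * dcoef q ρ i * qHermite q x (n + 2 - i) * GG q ρ x y i)
      (n + 1)]
    have hsplit : ∀ i ∈ Finset.range (n + 2),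
        qBinom q (n + 2) (i + 1) * dcoef q ρ (i + 1) * qHermite q x (n + 2 - (i + 1)) *
            GG q ρ x y (i + 1)
        = (qBinom q (n + 1) (i + 1) * dcoef q ρ (i + 1) * qHermite q x (n + 2 - (i + 1)) *
            GG q ρ x y (i + 1))
          + q ^ (n + 1 - i) * qBinom q (n + 1) i * dcoef q ρ (i + 1) *
            qHermite q x (n + 1 - i) * GG q ρ x y (i + 1) := by
      intro i hi
      rw [Finset.mem_range] at hi
      have hle : i ≤ n + 1 := by omega
      have e1 : n + 2 - (i + 1) = n + 1 - i := by omega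
      rw [e1, pascal hq hle]
      ring
    rw [Finset.sum_congr rfl hsplit, Finset.sum_add_distrib]
    have htop : ∑ i ∈ Finset.range (n + 2),
        qBinom q (n + 1) (i + 1) * dcoef q ρ (i + 1) * qHermite q x (n + 2 - (i + 1)) *
          GG q ρ x y (i + 1)
        = ∑ i ∈ Finset.range (n + 1),
        qBinom q (n + 1) (i + 1) * dcoef q ρ (i + 1) * qHermite q x (n + 2 - (i + 1)) *
          GG q ρ x y (i + 1) := by
      rw [Finset.sum_range_succ, binom_gt q (by omega)]
      ring
    rw [htop, binom_zero hq, binom_zero hq]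
    ring
  have h2 : ∑ i ∈ Finset.range (n + 2), qBinom q (n + 1) i * dcoef q ρ i *
      qHermite q x (n + 2 - i) * GG q ρ x y i
      = x * SS q ρ x y (n + 1) - qBracket q (n + 1) * SS q ρ x y n := by
    have hpt : ∀ i ∈ Finset.range (n + 2),
        qBinom q (n + 1) i * dcoef q ρ i * qHermite q x (n + 2 - i) * GG q ρ x y i
        = x * (qBinom q (n + 1) i * dcoef q ρ i * qHermite q x (n + 1 - i) * GG q ρ x y i)
          - qBinom q (n + 1) i * qBracket q (n + 1 - i) * dcoef q ρ i *
              qHermite q x (n - i) * GG q ρ x y i := by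
      intro i hi
      rw [Finset.mem_range] at hi
      have e1 : n + 2 - i = (n + 1 - i) + 1 := by omega
      have e2 : (n + 1 - i) - 1 = n - i := by omega
      rw [e1, Hrec, e2]
      ring
    rw [Finset.sum_congr rfl hpt, Finset.sum_sub_distrib, ← Finset.mul_sum]
    have hlast : ∑ i ∈ Finset.range (n + 2), qBinom q (n + 1) i * qBracket q (n + 1 - i) *
        dcoef q ρ i * qHermite q x (n - i) * GG q ρ x y i
        = qBracket q (n + 1) * SS q ρ x y n := by
      rw [Finset.sum_range_succ, Nat.sub_self, bracket_zero, SS, Finset.mul_sum]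
      rw [mul_zero, zero_mul, zero_mul, zero_mul, add_zero]
      apply Finset.sum_congr rfl
      intro i hi
      rw [Finset.mem_range] at hi
      rw [mulBracket2 hq (by omega : i ≤ n)]
      ring
    rw [hlast,
      show SS q ρ x y (n + 1) = ∑ i ∈ Finset.range (n + 2), qBinom q (n + 1) i * dcoef q ρ i *
        qHermite q x (n + 1 - i) * GG q ρ x y i from rfl]
  have h3 : ∑ i ∈ Finset.range (n + 2), q ^ (n + 1 - i) * qBinom q (n + 1) i * dcoef q ρ (i + 1) *
      qHermite q x (n + 1 - i) * GG q ρ x y (i + 1)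
      = (-ρ * q ^ (n + 1)) * ∑ i ∈ Finset.range (n + 2), qBinom q (n + 1) i * dcoef q ρ i *
          qHermite q x (n + 1 - i) * GG q ρ x y (i + 1) := by
    rw [Finset.mul_sum]
    apply Finset.sum_congr rfl
    intro i hi
    rw [Finset.mem_range] at hi
    have hp : q ^ (n + 1 - i) * q ^ i = q ^ (n + 1) := by
      rw [← pow_add, Nat.sub_add_cancel (by omega : i ≤ n + 1)]
    rw [dcoef_succ]
    linear_combination (qBinom q (n + 1) i * dcoef q ρ i * qHermite q x (n + 1 - i) *
      GG q ρ x y (i + 1) * (-ρ)) * hp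
  rw [h1, h2, h3]

end ASCaux
namespace ASCaux

variable {q ρ x y : ℝ}

/-- Step B: the recurrence for the auxiliary sum `U`. -/
lemma keyU (hq : |q| < 1) (hρ : |ρ| < 1) (n : ℕ) :
    (1 - ρ ^ 2 * q ^ (n + 1)) *
      ∑ i ∈ Finset.range (n + 2), qBinom q (n + 1) i * dcoef q ρ i *
        qHermite q x (n + 1 - i) * GG q ρ x y (i + 1)
    = (y - ρ * x) * SS q ρ x y (n + 1) + ρ * qBracket q (n + 1) * SS q ρ x y n := by
  -- auxiliary sums
  set V1 : ℝ := ∑ i ∈ Finset.range (n + 2), q ^ i * qBinom q (n + 1) i * dcoef q ρ i *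
    qHermite q x (n + 1 - i) * GG q ρ x y i with hV1_def
  set V2 : ℝ := ∑ i ∈ Finset.range (n + 1), q ^ i * qBinom q n i * dcoef q ρ i *
    qHermite q x (n - i) * GG q ρ x y i with hV2_def
  set W1 : ℝ := ∑ i ∈ Finset.range (n + 1), q ^ i * qBinom q n i * dcoef q ρ i *
    qHermite q x (n - i) * GG q ρ x y (i + 1) with hW1_def
  set W2 : ℝ := ∑ i ∈ Finset.range n, q ^ i * qBinom q (n - 1) i * dcoef q ρ i *
    qHermite q x (n - 1 - i) * GG q ρ x y (i + 1) with hW2_def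
  set W3 : ℝ := ∑ i ∈ Finset.range (n + 1), q ^ i * qBinom q n i * dcoef q ρ i *
    qHermite q x (n + 1 - i) * GG q ρ x y (i + 1) with hW3_def
  -- split (1 - ρ²q^{n+1}) pointwise
  have hsplit : (1 - ρ ^ 2 * q ^ (n + 1)) *
      ∑ i ∈ Finset.range (n + 2), qBinom q (n + 1) i * dcoef q ρ i *
        qHermite q x (n + 1 - i) * GG q ρ x y (i + 1)
      = (∑ i ∈ Finset.range (n + 2), qBinom q (n + 1) i * dcoef q ρ i *
          qHermite q x (n + 1 - i) * ((1 - ρ ^ 2 * q ^ i) * GG q ρ x y (i + 1)))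
        + ρ ^ 2 * (1 - q) *
          ∑ i ∈ Finset.range (n + 2), q ^ i * qBinom q (n + 1) i * qBracket q (n + 1 - i) *
            dcoef q ρ i * qHermite q x (n + 1 - i) * GG q ρ x y (i + 1) := by
    rw [Finset.mul_sum, Finset.mul_sum, ← Finset.sum_add_distrib]
    apply Finset.sum_congr rfl
    intro i hi
    rw [Finset.mem_range] at hi
    have hp : q ^ i * q ^ (n + 1 - i) = q ^ (n + 1) := by
      rw [← pow_add, Nat.add_sub_cancel' (by omega : i ≤ n + 1)]
    have hb : 1 - q ^ (n + 1 - i) = (1 - q) * qBracket q (n + 1 - i) := one_sub_pow q _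
    set c : ℝ := qBinom q (n + 1) i * dcoef q ρ i * qHermite q x (n + 1 - i) *
      GG q ρ x y (i + 1) with hc
    linear_combination (ρ ^ 2 * q ^ i * c) * hb + (ρ ^ 2 * c) * hp
  -- apply the G recurrence pointwise
  have hA : ∑ i ∈ Finset.range (n + 2), qBinom q (n + 1) i * dcoef q ρ i *
        qHermite q x (n + 1 - i) * ((1 - ρ ^ 2 * q ^ i) * GG q ρ x y (i + 1))
      = y * SS q ρ x y (n + 1) - ρ * x * V1
        - ∑ i ∈ Finset.range (n + 2), qBinom q (n + 1) i * qBracket q i * dcoef q ρ i *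
            qHermite q x (n + 1 - i) * GG q ρ x y (i - 1) := by
    rw [show SS q ρ x y (n + 1) = ∑ i ∈ Finset.range (n + 2), qBinom q (n + 1) i * dcoef q ρ i *
        qHermite q x (n + 1 - i) * GG q ρ x y i from rfl, hV1_def]
    rw [Finset.mul_sum, Finset.mul_sum, ← Finset.sum_sub_distrib, ← Finset.sum_sub_distrib]
    apply Finset.sum_congr rfl
    intro i hi
    have hg := Grec (x := x) (y := y) hq hρ i
    linear_combination (qBinom q (n + 1) i * dcoef q ρ i * qHermite q x (n + 1 - i)) * hg
  -- the G (i-1) sum telescopes to V2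
  have hR : ∑ i ∈ Finset.range (n + 2), qBinom q (n + 1) i * qBracket q i * dcoef q ρ i *
        qHermite q x (n + 1 - i) * GG q ρ x y (i - 1)
      = -ρ * qBracket q (n + 1) * V2 := by
    rw [Finset.sum_range_succ', bracket_zero, hV2_def, Finset.mul_sum]
    simp only [mul_zero, zero_mul, add_zero]
    apply Finset.sum_congr rfl
    intro i hi
    rw [Finset.mem_range] at hi
    have e1 : i + 1 - 1 = i := rfl
    have e2 : n + 1 - (i + 1) = n - i := by omega
    rw [e1, e2, dcoef_succ]
    have hm := mulBracket1 hq (by omega : i ≤ n)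
    linear_combination (-ρ * q ^ i * dcoef q ρ i * qHermite q x (n - i) * GG q ρ x y i) * hm
  -- difference identities
  have hSV1 : SS q ρ x y (n + 1) - V1 = -ρ * (1 - q) * qBracket q (n + 1) * W1 := by
    rw [show SS q ρ x y (n + 1) = ∑ i ∈ Finset.range (n + 2), qBinom q (n + 1) i * dcoef q ρ i *
        qHermite q x (n + 1 - i) * GG q ρ x y i from rfl, hV1_def]
    rw [← Finset.sum_sub_distrib]
    have hpt : ∀ i ∈ Finset.range (n + 2),
        qBinom q (n + 1) i * dcoef q ρ i * qHermite q x (n + 1 - i) * GG q ρ x y i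
          - q ^ i * qBinom q (n + 1) i * dcoef q ρ i * qHermite q x (n + 1 - i) * GG q ρ x y i
        = (1 - q) * (qBinom q (n + 1) i * qBracket q i * dcoef q ρ i *
            qHermite q x (n + 1 - i) * GG q ρ x y i) := by
      intro i hi
      have hb : 1 - q ^ i = (1 - q) * qBracket q i := one_sub_pow q i
      linear_combination (qBinom q (n + 1) i * dcoef q ρ i * qHermite q x (n + 1 - i) *
        GG q ρ x y i) * hb
    rw [Finset.sum_congr rfl hpt, ← Finset.mul_sum]
    rw [Finset.sum_range_succ', bracket_zero, hW1_def, Finset.mul_sum]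
    rw [mul_zero, zero_mul, zero_mul, zero_mul, add_zero, Finset.mul_sum]
    apply Finset.sum_congr rfl
    intro i hi
    rw [Finset.mem_range] at hi
    have e2 : n + 1 - (i + 1) = n - i := by omega
    rw [e2, dcoef_succ]
    have hm := mulBracket1 hq (by omega : i ≤ n)
    linear_combination ((1 - q) * (-ρ * q ^ i * dcoef q ρ i * qHermite q x (n - i) *
      GG q ρ x y (i + 1))) * hm
  have hSV2 : SS q ρ x y n - V2 = -ρ * (1 - q) * qBracket q n * W2 := by
    rw [SS, hV2_def, ← Finset.sum_sub_distrib]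
    have hpt : ∀ i ∈ Finset.range (n + 1),
        qBinom q n i * dcoef q ρ i * qHermite q x (n - i) * GG q ρ x y i
          - q ^ i * qBinom q n i * dcoef q ρ i * qHermite q x (n - i) * GG q ρ x y i
        = (1 - q) * (qBinom q n i * qBracket q i * dcoef q ρ i *
            qHermite q x (n - i) * GG q ρ x y i) := by
      intro i hi
      have hb : 1 - q ^ i = (1 - q) * qBracket q i := one_sub_pow q i
      linear_combination (qBinom q n i * dcoef q ρ i * qHermite q x (n - i) *
        GG q ρ x y i) * hb
    rw [Finset.sum_congr rfl hpt, ← Finset.mul_sum]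
    rw [Finset.sum_range_succ', bracket_zero, hW2_def, Finset.mul_sum]
    rw [mul_zero, zero_mul, zero_mul, zero_mul, add_zero, Finset.mul_sum]
    apply Finset.sum_congr rfl
    intro i hi
    rw [Finset.mem_range] at hi
    have e2 : n - (i + 1) = n - 1 - i := by omega
    have hn1 : n - 1 + 1 = n := by omega
    rw [e2, dcoef_succ]
    have hm := mulBracket1 (n := n - 1) hq (by omega : i ≤ n - 1)
    rw [hn1] at hm
    linear_combination ((1 - q) * (-ρ * q ^ i * dcoef q ρ i * qHermite q x (n - 1 - i) *
      GG q ρ x y (i + 1))) * hm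
  -- V3 reduces to W3
  have hV3 : ∑ i ∈ Finset.range (n + 2), q ^ i * qBinom q (n + 1) i * qBracket q (n + 1 - i) *
        dcoef q ρ i * qHermite q x (n + 1 - i) * GG q ρ x y (i + 1)
      = qBracket q (n + 1) * W3 := by
    rw [Finset.sum_range_succ, Nat.sub_self, bracket_zero, hW3_def, Finset.mul_sum]
    simp only [mul_zero, zero_mul, add_zero]
    apply Finset.sum_congr rfl
    intro i hi
    rw [Finset.mem_range] at hi
    have hm := mulBracket2 hq (by omega : i ≤ n)
    linear_combination (q ^ i * dcoef q ρ i * qHermite q x (n + 1 - i) *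
      GG q ρ x y (i + 1)) * hm
  -- Hermite recurrence on W3
  have hW : W3 = x * W1 - qBracket q n * W2 := by
    have hlast : ∑ i ∈ Finset.range (n + 1), q ^ i * qBinom q n i * qBracket q (n - i) *
        dcoef q ρ i * qHermite q x (n - 1 - i) * GG q ρ x y (i + 1)
        = qBracket q n * W2 := by
      rw [Finset.sum_range_succ, Nat.sub_self, bracket_zero, hW2_def, Finset.mul_sum]
      simp only [mul_zero, zero_mul, add_zero]
      apply Finset.sum_congr rfl
      intro i hi
      rw [Finset.mem_range] at hi
      have hn1 : n - 1 + 1 = n := by omega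
      have hm := mulBracket2 (n := n - 1) hq (by omega : i ≤ n - 1)
      rw [hn1] at hm
      linear_combination (q ^ i * dcoef q ρ i * qHermite q x (n - 1 - i) *
        GG q ρ x y (i + 1)) * hm
    have hpt : ∀ i ∈ Finset.range (n + 1),
        q ^ i * qBinom q n i * dcoef q ρ i * qHermite q x (n + 1 - i) * GG q ρ x y (i + 1)
        = x * (q ^ i * qBinom q n i * dcoef q ρ i * qHermite q x (n - i) * GG q ρ x y (i + 1))
          - q ^ i * qBinom q n i * qBracket q (n - i) * dcoef q ρ i *
              qHermite q x (n - 1 - i) * GG q ρ x y (i + 1) := by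
      intro i hi
      rw [Finset.mem_range] at hi
      have e1 : n + 1 - i = (n - i) + 1 := by omega
      have e2 : (n - i) - 1 = n - 1 - i := by omega
      rw [e1, Hrec, e2]
      ring
    rw [hW3_def, Finset.sum_congr rfl hpt, Finset.sum_sub_distrib, ← Finset.mul_sum,
      hlast, ← hW1_def]
  -- assemble
  linear_combination hsplit + hA - hR + (ρ ^ 2 * (1 - q)) * hV3
    + (ρ * x) * hSV1 - (ρ * qBracket q (n + 1)) * hSV2
    + (ρ ^ 2 * (1 - q) * qBracket q (n + 1)) * hW

end ASCaux
namespace ASCaux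

variable {q ρ x y : ℝ}

/-- The three-term recurrence for `SS`. -/
lemma key (hq : |q| < 1) (hρ : |ρ| < 1) (n : ℕ) :
    (1 - ρ ^ 2 * q ^ (n + 1)) * SS q ρ x y (n + 2) =
      (x - ρ * y * q ^ (n + 1)) * SS q ρ x y (n + 1) - qBracket q (n + 1) * SS q ρ x y n := by
  have hA := keyA (x := x) (y := y) hq hρ n
  have hU := keyU (x := x) (y := y) hq hρ n
  rw [hA]
  linear_combination (-(ρ * q ^ (n + 1))) * hU

lemma main (hq : |q| < 1) (hρ : |ρ| < 1) (n : ℕ) :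
    ASC q x y ρ n = qPoch (ρ ^ 2) q n * SS q ρ x y n := by
  induction n using Nat.twoStepInduction with
  | zero =>
    have h0 : qPoch (ρ ^ 2) q 0 = 1 := by simp [qPoch]
    have hS : SS q ρ x y 0 = 1 := by
      rw [SS]
      simp [binom_zero hq, dcoef, GG, qPoch, ASC, qHermite]
    rw [h0, hS]
    norm_num [ASC]
  | one =>
    have h1 : qPoch (ρ ^ 2) q 1 = 1 - ρ ^ 2 := by simp [qPoch]
    have hne : (1 : ℝ) - ρ ^ 2 ≠ 0 := by
      have := factor_pos hq hρ 0
      simpa using this.ne'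
    have hS : SS q ρ x y 1 =
        x + (-ρ) * ((y - ρ * x) / (1 - ρ ^ 2)) := by
      rw [SS, Finset.sum_range_succ, Finset.sum_range_succ, Finset.sum_range_zero]
      have e1 : qBinom q 1 0 = 1 := binom_zero hq 1
      have e2 : qBinom q 1 1 = 1 := binom_self hq 1
      have e3 : dcoef q ρ 0 = 1 := by simp [dcoef]
      have e4 : dcoef q ρ 1 = -ρ := by simp [dcoef]
      have e5 : qPoch (ρ ^ 2) q 1 = 1 - ρ ^ 2 := h1
      have e6 : GG q ρ x y 0 = 1 := by simp [GG, qPoch, ASC]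
      have e7 : GG q ρ x y 1 = (y - ρ * x) / (1 - ρ ^ 2) := by
        rw [GG, e5]
        rfl
      rw [e1, e2, e3, e4, e6, e7]
      norm_num [qHermite]
    rw [h1, hS]
    have : ASC q x y ρ 1 = x - ρ * y := rfl
    rw [this]
    field_simp
    ring
  | more n ih2 ih1 =>
    have hrec : ASC q x y ρ (n + 2) = (x - ρ * y * q ^ (n + 1)) * ASC q x y ρ (n + 1) -
        (1 - ρ ^ 2 * q ^ n) * qBracket q (n + 1) * ASC q x y ρ n := rfl
    have hk := key (x := x) (y := y) hq hρ n
    have hp1 : qPoch (ρ ^ 2) q (n + 1) = qPoch (ρ ^ 2) q n * (1 - ρ ^ 2 * q ^ n) :=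
      poch_succ _ _ n
    have hp2 : qPoch (ρ ^ 2) q (n + 2) = qPoch (ρ ^ 2) q (n + 1) * (1 - ρ ^ 2 * q ^ (n + 1)) :=
      poch_succ _ _ (n + 1)
    rw [hrec, ih2, ih1, hp2, hp1]
    linear_combination (-(qPoch (ρ ^ 2) q n * (1 - ρ ^ 2 * q ^ n))) * hk
end ASCaux

/-- Inverse expansion for the Al-Salam--Chihara polynomials. -/
theorem ASC_inverse_expansion (q ρ x y : ℝ) (hq : |q| < 1) (hρ : |ρ| < 1) (n : ℕ)
    (hn : 1 ≤ n) :
    ASC q x y ρ n = qPoch (ρ ^ 2) q n * ∑ i ∈ Finset.range (n + 1),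
      qBinom q n i * (-1 : ℝ) ^ i * q ^ (i * (i - 1) / 2) * ρ ^ i *
        qHermite q x (n - i) * ASC q y x ρ i / qPoch (ρ ^ 2) q i := by
  rw [ASCaux.main hq hρ n, ASCaux.SS]
  congr 1
  apply Finset.sum_congr rfl
  intro i _
  rw [ASCaux.dcoef, ASCaux.GG]
  ring
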